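/- Let n ≥ 2 and 0 ≤ k ≤ n−2. If A ∈ Matrix (Fin n) (Fin n) ℂ is such that the family (A^0, A^1, …, A^{n−k−1}) is linearly dependent over ℂ (equivalently, the minimal polynomial of A has degree at most n−k−1), then the determinant of the (n−k−1)×(n−k−1) matrix whose (r, c) entry, for 1 ≤ r, c ≤ n−k−1, is the (k+1+r, 1) entry of A^c, equals 0. (That is, the highest weight vector f_{k+1}, of degree binom(n−k, 2), lies in the vanishing ideal of the variety of matrices with minimal polynomial of degree at most n−k−1.) -/
import Mathlib

/-- Splitting a sum over `Fin (m+1)`-like index set into the zero term and the rest. -/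
lemma sum_split_aux {M : Type*} [AddCommMonoid M] {N m : ℕ} (h : N = m + 1)
    (F : Fin N → M) :
    ∑ i, F i = F ⟨0, by omega⟩ + ∑ c : Fin m, F ⟨(c : ℕ) + 1, by omega⟩ := by
  subst h
  rw [Fin.sum_univ_succ]
  rfl

/-- If the powers `A^0, A^1, …, A^{n-k-1}` of `A ∈ ℂ^{n×n}` are linearly dependent
(i.e. the minimal polynomial of `A` has degree at most `n-k-1`), then the highest
weight vector `f_{k+1}` vanishes at `A`: the determinant of the submatrix of
`(A·e₁ | ⋯ | A^{n-k-1}·e₁)` consisting of the last `n-k-1` rows is zero. -/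
theorem stmt_19 (n k : ℕ) (hn : 2 ≤ n) (hk : k ≤ n - 2)
    (A : Matrix (Fin n) (Fin n) ℂ)
    (hA : ¬ LinearIndependent ℂ (fun r : Fin (n - k) => A ^ (r : ℕ))) :
    Matrix.det (Matrix.of fun r c : Fin (n - k - 1) =>
      (A ^ ((c : ℕ) + 1))
        ⟨k + 1 + (r : ℕ), by have := r.isLt; omega⟩ ⟨0, by omega⟩) = 0 := by
  haveI : NeZero n := ⟨by omega⟩
  have hm : n - k = (n - k - 1) + 1 := by omega
  rw [Fintype.not_linearIndependent_iff] at hA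
  obtain ⟨g, hg, i0, hi0⟩ := hA
  rw [← Matrix.exists_mulVec_eq_zero_iff]
  by_cases hv : ∀ c : Fin (n - k - 1), g ⟨(c : ℕ) + 1, by omega⟩ = 0
  · exfalso
    rw [sum_split_aux hm] at hg
    have h0 : g ⟨0, by omega⟩ = 0 := by
      have hrest : ∑ c : Fin (n - k - 1),
          g ⟨(c : ℕ) + 1, by omega⟩ • A ^ (((⟨(c : ℕ) + 1, by omega⟩ : Fin (n - k)) : ℕ)) = 0 := by
        apply Finset.sum_eq_zero
        intro c _
        rw [hv c, zero_smul]
      rw [hrest, add_zero, pow_zero] at hg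
      rcases smul_eq_zero.mp hg with h | h
      · exact h
      · exact absurd h one_ne_zero
    apply hi0
    rcases Nat.eq_zero_or_pos (i0 : ℕ) with h | h
    · have : i0 = ⟨0, by omega⟩ := Fin.ext h
      rw [this]; exact h0
    · have hi : i0 = ⟨((i0 : ℕ) - 1) + 1, by omega⟩ := Fin.ext (by show (i0 : ℕ) = (i0 : ℕ) - 1 + 1; omega)
      rw [hi]; exact hv ⟨(i0 : ℕ) - 1, by omega⟩
  · push_neg at hv
    obtain ⟨c0, hc0⟩ := hv
    refine ⟨fun c => g ⟨(c : ℕ) + 1, by omega⟩, fun h => hc0 (congrFun h c0), ?_⟩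
    funext r
    have hrow := congrFun (congrFun hg ⟨k + 1 + (r : ℕ), by have := r.isLt; omega⟩)
      ⟨0, by omega⟩
    rw [Matrix.zero_apply] at hrow
    rw [Matrix.sum_apply] at hrow
    rw [sum_split_aux hm] at hrow
    have hone : ((g ⟨0, by omega⟩ • A ^ (((⟨0, by omega⟩ : Fin (n - k)) : ℕ)))
        ⟨k + 1 + (r : ℕ), by have := r.isLt; omega⟩ ⟨0, by omega⟩) = 0 := by
      simp only [Matrix.smul_apply, pow_zero]
      rw [Matrix.one_apply_ne (by simp [Fin.ext_iff])]
      simp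
    rw [hone, zero_add] at hrow
    simp only [Matrix.mulVec, dotProduct, Matrix.of_apply, Pi.zero_apply]
    rw [← hrow]
    apply Finset.sum_congr rfl
    intro c _
    simp only [Matrix.smul_apply, smul_eq_mul]
    ring
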